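/- Let (a, B_a) be a Lie superalgebra over a field of characteristic 2 with an even NIS, D an odd derivation with B_a(D(a),b) = B_a(a,D(b)) for all a,b, and a₀ ∈ a₀ with D² = ad_{a₀} and D(a₀) = 0. Then g := Kx ⊕ a ⊕ Kx* (x odd) with bracket [x, g] = 0, [a,b]_g := [a,b]_a + B_a(D(a),b)x, [x*, a]_g := D(a), and squaring s_g(rx + a + tx*) := s_a(a) + t²a₀ + tD(a), is a Lie superalgebra, and the form B_g extending B_a with B_g(x,x*) = 1 and B_g(x,x) = B_g(x*,x*) = 0, a ⊥ x, a ⊥ x*, is a NIS on g. -/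

import Mathlib

/-- the odd double extension (`D`-extension with `x` odd) of a NIS-Lie
superalgebra `(a, B_a)` in characteristic 2 (`B_a` even) by an odd derivation `D`
with `D² = ad_{a₀}`, `D(a₀) = 0`, is again a NIS-Lie superalgebra. The extended space
is `K x ⊕ a ⊕ K x*` with `x, x*` odd, modeled as `K × V × K`. -/
theorem stmt16 {K V : Type*} [Field K] [CharP K 2]
    [AddCommGroup V] [Module K V]
    (g0 g1 : Submodule K V) (hcompl : IsCompl g0 g1)
    (br : V →ₗ[K] V →ₗ[K] V) (sq : V → V)
    -- Lie superalgebra axioms on `a`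
    (halt : ∀ u : V, br u u = 0)
    (hjac : ∀ u v w : V, br u (br v w) + br v (br w u) + br w (br u v) = 0)
    (hbr00 : ∀ x ∈ g0, ∀ y ∈ g0, br x y ∈ g0)
    (hbr01 : ∀ x ∈ g0, ∀ y ∈ g1, br x y ∈ g1)
    (hbr11 : ∀ x ∈ g1, ∀ y ∈ g1, br x y ∈ g0)
    (hsqmem : ∀ x ∈ g1, sq x ∈ g0)
    (hsqsmul : ∀ (c : K), ∀ x ∈ g1, sq (c • x) = (c * c) • sq x)
    (hsqpol : ∀ x ∈ g1, ∀ y ∈ g1, sq (x + y) + sq x + sq y = br x y)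
    (hsqjac : ∀ x ∈ g1, ∀ y : V, br (sq x) y = br x (br x y))
    -- even NIS on `a`
    (B : V →ₗ[K] V →ₗ[K] K)
    (hBnd : ∀ x, (∀ y, B x y = 0) → x = 0)
    (hBinv : ∀ x y z, B (br x y) z = B x (br y z))
    (hBsym : ∀ x y, B x y = B y x)
    (hBalt : ∀ x ∈ g1, B x x = 0)
    (hBeven : ∀ x ∈ g0, ∀ y ∈ g1, B x y = 0)
    -- the odd derivation `D` and `a₀`
    (D : V →ₗ[K] V) (a₀ : V) (ha₀ : a₀ ∈ g0)
    (hD0 : ∀ x ∈ g0, D x ∈ g1) (hD1 : ∀ x ∈ g1, D x ∈ g0)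
    (hDbr : ∀ x y, D (br x y) = br (D x) y + br x (D y))
    (hDsq : ∀ x ∈ g1, D (sq x) = br (D x) x)
    (hDsym : ∀ x y, B (D x) y = B x (D y))
    (hD2 : ∀ v, D (D v) = br a₀ v)
    (hDa₀ : D a₀ = 0)
    -- the double extension data on `K × V × K` (`x = (1,0,0)`, `x* = (0,0,1)`, both odd)
    (brG : (K × V × K) → (K × V × K) → (K × V × K))
    (hbrG : ∀ u v, brG u v =
      (B (D u.2.1) v.2.1, br u.2.1 v.2.1 + u.2.2 • D v.2.1 + v.2.2 • D u.2.1, 0))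
    (sG : (K × V × K) → (K × V × K))
    (hsG : ∀ u, sG u = (0, sq u.2.1 + (u.2.2 * u.2.2) • a₀ + u.2.2 • D u.2.1, 0))
    (BG : (K × V × K) → (K × V × K) → K)
    (hBG : ∀ u v, BG u v = B u.2.1 v.2.1 + u.1 * v.2.2 + u.2.2 * v.1)
    (G0 G1 : Set (K × V × K))
    (hG0 : G0 = {u | u.1 = 0 ∧ u.2.1 ∈ g0 ∧ u.2.2 = 0})
    (hG1 : G1 = {u | u.2.1 ∈ g1}) :
    -- `g` is a Lie superalgebra
    (∀ u, brG u u = 0) ∧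
    (∀ u v w, brG u (brG v w) + brG v (brG w u) + brG w (brG u v) = 0) ∧
    (∀ u ∈ G1, sG u ∈ G0) ∧
    (∀ (c : K), ∀ u ∈ G1, sG (c • u) = (c * c) • sG u) ∧
    (∀ u ∈ G1, ∀ v ∈ G1, sG (u + v) + sG u + sG v = brG u v) ∧
    (∀ u ∈ G1, ∀ v, brG (sG u) v = brG u (brG u v)) ∧
    -- `B_g` is an even NIS: non-degenerate, invariant, even, 0̄-antisymmetric
    (∀ u, (∀ v, BG u v = 0) → u = 0) ∧
    (∀ u v w, BG (brG u v) w = BG u (brG v w)) ∧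
    (∀ u v, BG u v = BG v u) ∧
    (∀ u ∈ G1, BG u u = 0) ∧
    (∀ u ∈ G0, ∀ v ∈ G1, BG u v = 0) := by
  have h2 : (2:K) = 0 := by exact_mod_cast CharP.cast_eq_zero K 2
  have hK2 : ∀ c : K, c + c = 0 := fun c => by rw [← two_mul, h2, zero_mul]
  have h2V : ∀ v : V, (2:K) • v = 0 := fun v => by rw [h2, zero_smul]
  have hV2 : ∀ v : V, v + v = 0 := fun v => by rw [← two_smul K v, h2V]
  have hbrsym : ∀ x y : V, br x y = br y x := by
    intro x y
    have h := halt (x + y)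
    simp only [map_add, LinearMap.add_apply, halt, zero_add, add_zero] at h
    have := neg_eq_of_add_eq_zero_left h
    rw [← this, neg_eq_of_add_eq_zero_left (hV2 (br x y))]
  have hcyc : ∀ x y z : V, B (br x y) z = B (br z x) y := by
    intro x y z
    rw [hBinv, hBsym, hBinv, hBsym]
  have hBDD : ∀ v : V, B (D v) (D v) = 0 := by
    intro v
    rw [hDsym, hD2, ← hBinv v a₀ v, hbrsym v a₀, hBinv a₀ v v, halt, map_zero]
  have hBDself : ∀ v : V, B (D v) v = 0 := by
    intro v
    obtain ⟨p, hp, q, hq, hpq⟩ := Submodule.mem_sup.mp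
      (by rw [hcompl.sup_eq_top]; trivial : v ∈ g0 ⊔ g1)
    subst hpq
    simp only [map_add, LinearMap.add_apply]
    have e1 : B (D p) p = 0 := by rw [hBsym]; exact hBeven p hp (D p) (hD0 p hp)
    have e2 : B (D q) q = 0 := hBeven (D q) (hD1 q hq) q hq
    have e3 : B (D p) q = B (D q) p := by rw [hDsym, hBsym]
    linear_combination e1 + e2 + e3 + h2 * B (D q) p
  refine ⟨?_, ?_, ?_, ?_, ?_, ?_, ?_, ?_, ?_, ?_, ?_⟩
  · -- brG u u = 0
    intro u
    rw [hbrG, hBDself, halt]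
    simp [hV2]
  · intro u v w
    obtain ⟨r, a, t⟩ := u
    obtain ⟨p, b, s⟩ := v
    obtain ⟨q, c, m⟩ := w
    simp only [hbrG, map_add, map_smul, LinearMap.add_apply, LinearMap.smul_apply,
      smul_add, smul_smul, smul_eq_mul, Prod.mk_add_mk, Prod.mk_eq_zero]
    refine ⟨?_, ?_, ?_⟩
    · have main : B (D a) (br b c) = B (D b) (br c a) + B (D c) (br a b) := by
        rw [hDsym, hDbr, map_add, hBsym a, ← hBinv a b (D c), hBsym (br a b), hBinv (D b) c a]
      linear_combination main + s * hBsym (D a) (D c) + m * hBsym (D a) (D b) +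
        t * hBsym (D b) (D c) + (s * B (D c) (D a) + m * B (D b) (D a) + t * B (D c) (D b) +
          B (D b) (br c a) + B (D c) (br a b)) * h2
    · simp only [hDbr, hD2, zero_smul, add_zero, smul_add]
      linear_combination (norm := module) hjac a b c + s • hbrsym a (D c) + m • hbrsym b (D a) +
        t • hbrsym (D b) c + s • h2V (br (D c) a) + s • h2V (br c (D a)) + m • h2V (br (D a) b) +
        m • h2V (br a (D b)) + t • h2V (br c (D b)) + t • h2V (br b (D c)) +
        (t*s) • h2V (br a₀ c) + (t*m) • h2V (br a₀ b) + (s*m) • h2V (br a₀ a)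
    · ring
  · -- sG maps G1 to G0
    intro u hu
    rw [hG1] at hu
    rw [hG0, hsG]
    exact ⟨rfl, Submodule.add_mem _ (Submodule.add_mem _ (hsqmem _ hu)
      (Submodule.smul_mem _ _ ha₀)) (Submodule.smul_mem _ _ (hD1 _ hu)), rfl⟩
  · -- sG (c • u) = c² • sG u
    intro c u hu
    rw [hG1] at hu
    rw [hsG, hsG]
    simp only [Prod.smul_snd, Prod.smul_fst, smul_eq_mul, map_smul, Prod.smul_mk,
      smul_zero, mul_zero]
    rw [hsqsmul c _ hu]
    refine Prod.ext rfl (Prod.ext ?_ rfl)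
    module
  · -- polarization
    intro u hu v hv
    rw [hG1] at hu; rw [hG1] at hv
    obtain ⟨r, a, t⟩ := u
    obtain ⟨p, b, s⟩ := v
    simp only [Set.mem_setOf_eq] at hu hv
    simp only [hsG, hbrG, hsG, Prod.fst_add, Prod.snd_add, Prod.mk_add_mk, map_add,
      Prod.mk.injEq]
    refine ⟨by rw [hBeven _ (hD1 _ hu) _ hv]; ring, ?_, by ring⟩
    linear_combination (norm := module) hsqpol a hu b hv +
      (t*t + s*s + t*s) • h2V a₀ + t • h2V (D a) + s • h2V (D b)
  · -- squaring Jacobi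
    intro u hu v
    rw [hG1] at hu
    obtain ⟨r, a, t⟩ := u
    obtain ⟨p, b, s⟩ := v
    simp only [Set.mem_setOf_eq] at hu
    simp only [hsG, hbrG, map_add, map_smul, LinearMap.add_apply, LinearMap.smul_apply,
      smul_add, smul_smul, smul_eq_mul, Prod.mk.injEq]
    rw [hDsq a hu, hDa₀]
    simp only [hD2, hDbr, hBDD, map_add, map_smul, LinearMap.add_apply, LinearMap.smul_apply,
      smul_add, smul_smul, smul_eq_mul, smul_zero, mul_zero, zero_smul, map_zero,
      LinearMap.zero_apply]
    have e2 : B (br a₀ a) b = B a (br a₀ b) := by rw [hbrsym a₀ a, hBinv]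
    have e3 : B (D a) (D b) = B a (br a₀ b) := by rw [hDsym, hD2]
    refine ⟨by linear_combination hBinv (D a) a b + t * e2 - t * e3, ?_, trivial⟩
    linear_combination (norm := module) hsqjac a hu b + s • hbrsym (D a) a -
      t • h2V (br a (D b))
  · -- nondegeneracy
    intro u hu
    obtain ⟨r, a, t⟩ := u
    simp only [hBG] at hu
    have h1 := hu (0, 0, 1)
    have h2' := hu (1, 0, 0)
    have h3 : a = 0 := hBnd a (fun y => by have := hu (0, y, 0); simpa using this)
    simp only [map_zero, LinearMap.zero_apply, mul_one, mul_zero, add_zero, zero_add,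
      mul_comm] at h1 h2'
    simp [Prod.ext_iff, h1, h2', h3]
  · -- invariance
    intro u v w
    obtain ⟨r, a, t⟩ := u
    obtain ⟨p, b, s⟩ := v
    obtain ⟨q, c, m⟩ := w
    simp only [hbrG, hBG, map_add, map_smul, LinearMap.add_apply, LinearMap.smul_apply,
      smul_eq_mul]
    linear_combination hBinv a b c + s * hDsym a c + m * hDsym a b
  · -- symmetry
    intro u v
    simp only [hBG]
    linear_combination hBsym u.2.1 v.2.1
  · -- BG u u = 0 on G1
    intro u hu
    rw [hG1] at hu
    simp only [hBG]
    linear_combination hBalt u.2.1 hu + (u.1 * u.2.2) * h2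
  · -- evenness
    intro u hu v hv
    rw [hG0] at hu; rw [hG1] at hv
    simp only [Set.mem_setOf_eq] at hu hv
    rw [hBG, hu.1, hu.2.2, hBeven _ hu.2.1 _ hv]
    ring
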